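/- arXiv:2302.07851 — 6 statements merged into one kernel-verified Lean document; each statement's English description precedes it below -/
import Mathlib

section
/- Suppose f : ℝ^d → ℝ is C_v-one-point convex and ρ̂-quasar convex with respect to a global minimizer w*. Then for any θ > 1, f is (ρ, μ)-strongly quasar convex with ρ = ρ̂/θ and μ = 2C_v(θ−1)/ρ̂. -/
open RealInnerProductSpace

theorem strongly_quasar_of_one_point_convex {d : ℕ}
    (f : EuclideanSpace ℝ (Fin d) → ℝ)
    (gradf : EuclideanSpace ℝ (Fin d) → EuclideanSpace ℝ (Fin d))
    (Cv ρhat : ℝ) (wstar : EuclideanSpace ℝ (Fin d))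
    (hCv : 0 < Cv) (hρhat : 0 < ρhat)
    (hgrad : ∀ w, HasGradientAt f (gradf w) w)
    (hmin : ∀ w, f wstar ≤ f w)
    (hopc : ∀ w, Cv * ‖w - wstar‖ ^ 2 ≤ ⟪gradf w, w - wstar⟫)
    (hquasar : ∀ w, f w + (1 / ρhat) * ⟪gradf w, wstar - w⟫ ≤ f wstar)
    (θ : ℝ) (hθ : 1 < θ) :
    ∀ w, f w + (1 / (ρhat / θ)) * ⟪gradf w, wstar - w⟫
        + (2 * Cv * (θ - 1) / ρhat) / 2 * ‖wstar - w‖ ^ 2 ≤ f wstar := by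
  intro w
  have h1 := hopc w
  have h2 := hquasar w
  have key : ⟪gradf w, wstar - w⟫ = -⟪gradf w, w - wstar⟫ := by
    rw [← inner_neg_right]; congr 1; abel
  have hn : ‖wstar - w‖ = ‖w - wstar‖ := norm_sub_rev _ _
  rw [key] at h2
  have hθ' : 0 < θ := lt_trans one_pos hθ
  have hinv : 1 / (ρhat / θ) = θ / ρhat := by field_simp
  rw [key, hn, hinv]
  have h3 : (θ - 1) / ρhat * (Cv * ‖w - wstar‖ ^ 2 - ⟪gradf w, w - wstar⟫) ≤ 0 := by
    apply mul_nonpos_of_nonneg_of_nonpos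
    · exact div_nonneg (by linarith) hρhat.le
    · linarith
  have hid : θ / ρhat * (-⟪gradf w, w - wstar⟫) + 2 * Cv * (θ - 1) / ρhat / 2 * ‖w - wstar‖ ^ 2
      = 1 / ρhat * (-⟪gradf w, w - wstar⟫)
        + (θ - 1) / ρhat * (Cv * ‖w - wstar‖ ^ 2 - ⟪gradf w, w - wstar⟫) := by ring
  linarith [h2, h3, hid]
end

section
/- Suppose f : ℝ^d → ℝ satisfies the ν-quadratic-growth condition and is ρ̂-quasar convex with respect to a global minimizer w*. Then for any 0 < θ < 1, f is (ρ, μ)-strongly quasar convex with ρ = ρ̂·θ and μ = ν(1−θ)/θ. -/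
open RealInnerProductSpace

theorem strongly_quasar_of_quadratic_growth {d : ℕ}
    (f : EuclideanSpace ℝ (Fin d) → ℝ)
    (gradf : EuclideanSpace ℝ (Fin d) → EuclideanSpace ℝ (Fin d))
    (ν ρhat : ℝ) (wstar : EuclideanSpace ℝ (Fin d))
    (hν : 0 < ν) (hρhat : 0 < ρhat)
    (hgrad : ∀ w, HasGradientAt f (gradf w) w)
    (hmin : ∀ w, f wstar ≤ f w)
    (hQG : ∀ w, ν / 2 * ‖w - wstar‖ ^ 2 ≤ f w - f wstar)
    (hquasar : ∀ w, f w + (1 / ρhat) * ⟪gradf w, wstar - w⟫ ≤ f wstar)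
    (θ : ℝ) (hθ0 : 0 < θ) (hθ1 : θ < 1) :
    ∀ w, f w + (1 / (ρhat * θ)) * ⟪gradf w, wstar - w⟫
        + (ν * (1 - θ) / θ) / 2 * ‖wstar - w‖ ^ 2 ≤ f wstar := by
  intro w
  have hq := hquasar w
  have hg := hQG w
  rw [norm_sub_rev]
  set I : ℝ := ⟪gradf w, wstar - w⟫ with hI
  set S : ℝ := ‖w - wstar‖ ^ 2 with hS
  have h1 : (1 / (ρhat * θ)) * I = (1 / θ) * ((1 / ρhat) * I) := by
    field_simp
  rw [h1]
  have hip : (1 / ρhat) * I ≤ f wstar - f w := by linarith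
  have h3 := mul_le_mul_of_nonneg_left hip (le_of_lt (one_div_pos.mpr hθ0))
  have h4 := mul_le_mul_of_nonneg_left hg
    (div_nonneg (by linarith : (0:ℝ) ≤ 1 - θ) hθ0.le)
  have hθne : θ ≠ 0 := ne_of_gt hθ0
  have e1 : (1/θ) * (f wstar - f w) + (1-θ)/θ * (f w - f wstar) = f wstar - f w := by
    field_simp; ring
  have e2 : (ν * (1 - θ) / θ) / 2 * S = (1-θ)/θ * (ν / 2 * S) := by ring
  rw [e2]
  linarith
end

section
/- Let σ : ℝ → ℝ be differentiable with σ'(z) ≥ α > 0 for all z, and let f(w) = (1/n) Σ_i (1/2)(σ(wᵀ x_i) − σ(w*ᵀ x_i))². Then ⟨∇f(w), w − w*⟩ ≥ α² · (1/n) Σ_i ((w − w*)ᵀ x_i)² for all w ∈ ℝ^d. -/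
open RealInnerProductSpace Finset

lemma key_mono {σ : ℝ → ℝ} {α : ℝ} (hσ : Differentiable ℝ σ)
    (hσ' : ∀ z, α ≤ deriv σ z) (a b : ℝ) :
    α * (a - b) ^ 2 ≤ (σ a - σ b) * (a - b) := by
  have hdiff : Differentiable ℝ (fun z => σ z - α * z) :=
    hσ.sub (differentiable_const α |>.mul differentiable_id)
  have hmono : Monotone (fun z => σ z - α * z) := by
    apply monotone_of_deriv_nonneg hdiff
    intro z
    have : deriv (fun z => σ z - α * z) z = deriv σ z - α := by
      have h := ((hσ z).hasDerivAt.sub (((hasDerivAt_id z).const_mul α))).deriv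
      exact h.trans (by ring)
    rw [this]
    linarith [hσ' z]
  rcases le_total b a with h | h
  · have := hmono h
    have h2 : α * (a - b) ≤ σ a - σ b := by dsimp at this; linarith
    nlinarith
  · have := hmono h
    have h2 : σ a - σ b ≤ α * (a - b) := by dsimp at this; linarith
    nlinarith

theorem glm_empirical_generalized_var_coherent {d n : ℕ} (hn : 0 < n)
    (σ : ℝ → ℝ) (α : ℝ) (hα : 0 < α)
    (hσ : Differentiable ℝ σ)
    (hσ' : ∀ z, α ≤ deriv σ z)
    (x : Fin n → EuclideanSpace ℝ (Fin d))
    (wstar : EuclideanSpace ℝ (Fin d)) :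
    ∀ w : EuclideanSpace ℝ (Fin d),
      α ^ 2 * ((1 / (n : ℝ)) * ∑ i, (⟪w - wstar, x i⟫ : ℝ) ^ 2) ≤
      ⟪(1 / (n : ℝ)) •
          ∑ i, ((σ ⟪w, x i⟫ - σ ⟪wstar, x i⟫) * deriv σ ⟪w, x i⟫) • x i,
        w - wstar⟫ := by
  intro w
  rw [real_inner_smul_left, sum_inner]
  have hterm : ∀ i : Fin n,
      α ^ 2 * (⟪w - wstar, x i⟫ : ℝ) ^ 2 ≤
      ⟪((σ ⟪w, x i⟫ - σ ⟪wstar, x i⟫) * deriv σ ⟪w, x i⟫) • x i, w - wstar⟫ := by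
    intro i
    rw [real_inner_smul_left]
    have hv : (⟪x i, w - wstar⟫ : ℝ) = ⟪w, x i⟫ - ⟪wstar, x i⟫ := by
      rw [real_inner_comm, inner_sub_left]
    rw [hv]
    set a := (⟪w, x i⟫ : ℝ)
    set b := (⟪wstar, x i⟫ : ℝ)
    have hab : (⟪w - wstar, x i⟫ : ℝ) = a - b := inner_sub_left _ _ _
    rw [hab]
    have h1 : α * (a - b) ^ 2 ≤ (σ a - σ b) * (a - b) := key_mono hσ hσ' a b
    have h2 : α ≤ deriv σ a := hσ' a
    have h0 : 0 ≤ (σ a - σ b) * (a - b) := le_trans (by positivity) h1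
    have h3 : α * ((σ a - σ b) * (a - b)) ≤ deriv σ a * ((σ a - σ b) * (a - b)) :=
      mul_le_mul_of_nonneg_right h2 h0
    have h4 : α * (α * (a - b) ^ 2) ≤ α * ((σ a - σ b) * (a - b)) :=
      mul_le_mul_of_nonneg_left h1 hα.le
    nlinarith [h3, h4]
  calc α ^ 2 * ((1 / (n : ℝ)) * ∑ i, (⟪w - wstar, x i⟫ : ℝ) ^ 2)
      = (1 / (n : ℝ)) * ∑ i, α ^ 2 * (⟪w - wstar, x i⟫ : ℝ) ^ 2 := by
        rw [mul_left_comm, mul_sum]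
    _ ≤ (1 / (n : ℝ)) * ∑ i, ⟪((σ ⟪w, x i⟫ - σ ⟪wstar, x i⟫) * deriv σ ⟪w, x i⟫) • x i, w - wstar⟫ := by
        apply mul_le_mul_of_nonneg_left (sum_le_sum fun i _ => hterm i)
        positivity
end

section
/- Let σ : ℝ → ℝ be L₀-Lipschitz and differentiable with σ'(z) ≥ α > 0 for all z. Then the empirical GLM loss f(w) = (1/n) Σ_i (1/2)(σ(wᵀ x_i) − σ(w*ᵀ x_i))² is ρ-quasar convex with ρ = 2α²/L₀² and global minimizer w*, i.e., f(w*) ≥ f(w) + (L₀²/(2α²))⟨∇f(w), w* − w⟩ for all w. -/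
open RealInnerProductSpace Finset

lemma mvt_lb (σ : ℝ → ℝ) (α : ℝ) (hσ : Differentiable ℝ σ)
    (hσ' : ∀ z, α ≤ deriv σ z) (a b : ℝ) :
    α * (a - b)^2 ≤ (σ a - σ b) * (a - b) := by
  rcases lt_trichotomy a b with h | h | h
  · obtain ⟨ξ, _, hξ⟩ := exists_deriv_eq_slope σ h hσ.continuous.continuousOn
      (fun z _ => (hσ z).differentiableWithinAt)
    have := hσ' ξ
    rw [hξ] at this
    have hba : 0 < b - a := by linarith
    rw [le_div_iff₀ hba] at this
    nlinarith
  · simp [h]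
  · obtain ⟨ξ, _, hξ⟩ := exists_deriv_eq_slope σ h hσ.continuous.continuousOn
      (fun z _ => (hσ z).differentiableWithinAt)
    have := hσ' ξ
    rw [hξ] at this
    have hba : 0 < a - b := by linarith
    rw [le_div_iff₀ hba] at this
    nlinarith

lemma term_bound (σ : ℝ → ℝ) (L0 α : ℝ) (hα : 0 < α) (hL0 : 0 < L0)
    (hLip : ∀ a b : ℝ, |σ a - σ b| ≤ L0 * |a - b|)
    (hσ : Differentiable ℝ σ) (hσ' : ∀ z, α ≤ deriv σ z)
    (a b : ℝ) :
    (1 / 2) * (σ a - σ b) ^ 2 +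
      (L0 ^ 2 / (2 * α ^ 2)) * ((σ a - σ b) * deriv σ a * (b - a)) ≤ 0 := by
  have h1 := mvt_lb σ α hσ hσ' a b
  have h2 : (σ a - σ b)^2 ≤ L0^2 * (a - b)^2 := by
    have := hLip a b
    nlinarith [abs_nonneg (σ a - σ b), abs_nonneg (a - b), sq_abs (σ a - σ b), sq_abs (a - b)]
  have hD := hσ' a
  have hΔδ : 0 ≤ (σ a - σ b) * (a - b) := le_trans (by positivity) h1
  have hα2 : 0 < 2 * α^2 := by positivity
  have key : α^2 * (σ a - σ b)^2 + L0^2 * ((σ a - σ b) * deriv σ a * (b - a)) ≤ 0 := by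
    nlinarith [mul_le_mul_of_nonneg_left h1 (show (0:ℝ) ≤ L0^2 * α by positivity),
      mul_le_mul_of_nonneg_left h2 (show (0:ℝ) ≤ α^2 by positivity),
      mul_nonneg (mul_nonneg (show (0:ℝ) ≤ L0^2 by positivity) (sub_nonneg.2 hD)) hΔδ]
  have heq : (1 / 2) * (σ a - σ b) ^ 2 +
      (L0 ^ 2 / (2 * α ^ 2)) * ((σ a - σ b) * deriv σ a * (b - a)) =
      (1 / (2 * α^2)) * (α^2 * (σ a - σ b)^2 + L0^2 * ((σ a - σ b) * deriv σ a * (b - a))) := by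
    field_simp
  rw [heq]
  exact mul_nonpos_of_nonneg_of_nonpos (by positivity) key


theorem glm_empirical_quasar_convex {d n : ℕ} (hn : 0 < n)
    (σ : ℝ → ℝ) (L0 α : ℝ) (hα : 0 < α) (hL0 : 0 < L0)
    (hLip : ∀ a b : ℝ, |σ a - σ b| ≤ L0 * |a - b|)
    (hσ : Differentiable ℝ σ)
    (hσ' : ∀ z, α ≤ deriv σ z)
    (x : Fin n → EuclideanSpace ℝ (Fin d))
    (wstar : EuclideanSpace ℝ (Fin d))
    (f : EuclideanSpace ℝ (Fin d) → ℝ)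
    (hf : ∀ w, f w = (1 / (n : ℝ)) *
      ∑ i, (1 / 2) * (σ ⟪w, x i⟫ - σ ⟪wstar, x i⟫) ^ 2)
    (gradf : EuclideanSpace ℝ (Fin d) → EuclideanSpace ℝ (Fin d))
    (hgradf : ∀ w, gradf w = (1 / (n : ℝ)) •
      ∑ i, ((σ ⟪w, x i⟫ - σ ⟪wstar, x i⟫) * deriv σ ⟪w, x i⟫) • x i) :
    ∀ w, f w + (L0 ^ 2 / (2 * α ^ 2)) * ⟪gradf w, wstar - w⟫ ≤ f wstar := by
  intro w
  have hfstar : f wstar = 0 := by simp [hf]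
  rw [hfstar, hf, hgradf]
  have hinner : ⟪(1 / (n : ℝ)) •
      ∑ i, ((σ ⟪w, x i⟫ - σ ⟪wstar, x i⟫) * deriv σ ⟪w, x i⟫) • x i, wstar - w⟫
      = (1 / (n : ℝ)) * ∑ i, ((σ ⟪w, x i⟫ - σ ⟪wstar, x i⟫) * deriv σ ⟪w, x i⟫)
          * (⟪wstar, x i⟫ - ⟪w, x i⟫) := by
    rw [real_inner_smul_left, sum_inner]
    congr 1
    refine Finset.sum_congr rfl fun i _ => ?_
    rw [real_inner_smul_left, inner_sub_right, real_inner_comm (x i) wstar,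
      real_inner_comm (x i) w]
  rw [hinner]
  have hn' : (0:ℝ) ≤ 1 / (n : ℝ) := by positivity
  have hS : ∑ i, ((1 / 2) * (σ ⟪w, x i⟫ - σ ⟪wstar, x i⟫) ^ 2 +
      (L0 ^ 2 / (2 * α ^ 2)) * ((σ ⟪w, x i⟫ - σ ⟪wstar, x i⟫) * deriv σ ⟪w, x i⟫
        * (⟪wstar, x i⟫ - ⟪w, x i⟫))) ≤ 0 :=
    Finset.sum_nonpos fun i _ =>
      term_bound σ L0 α hα hL0 hLip hσ hσ' ⟪w, x i⟫ ⟪wstar, x i⟫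
  have e1 : ∑ i, ((1 / 2) * (σ ⟪w, x i⟫ - σ ⟪wstar, x i⟫) ^ 2 +
      (L0 ^ 2 / (2 * α ^ 2)) * ((σ ⟪w, x i⟫ - σ ⟪wstar, x i⟫) * deriv σ ⟪w, x i⟫
        * (⟪wstar, x i⟫ - ⟪w, x i⟫))) =
      ∑ i, (1 / 2) * (σ ⟪w, x i⟫ - σ ⟪wstar, x i⟫) ^ 2 +
      (L0 ^ 2 / (2 * α ^ 2)) * ∑ i, (σ ⟪w, x i⟫ - σ ⟪wstar, x i⟫) * deriv σ ⟪w, x i⟫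
        * (⟪wstar, x i⟫ - ⟪w, x i⟫) := by
    rw [Finset.sum_add_distrib, Finset.mul_sum]
  calc 1 / (n : ℝ) * ∑ i, (1 / 2) * (σ ⟪w, x i⟫ - σ ⟪wstar, x i⟫) ^ 2 +
        (L0 ^ 2 / (2 * α ^ 2)) * ((1 / (n : ℝ)) *
          ∑ i, (σ ⟪w, x i⟫ - σ ⟪wstar, x i⟫) * deriv σ ⟪w, x i⟫
            * (⟪wstar, x i⟫ - ⟪w, x i⟫))
      = (1 / (n : ℝ)) * (∑ i, (1 / 2) * (σ ⟪w, x i⟫ - σ ⟪wstar, x i⟫) ^ 2 +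
          (L0 ^ 2 / (2 * α ^ 2)) * ∑ i, (σ ⟪w, x i⟫ - σ ⟪wstar, x i⟫) * deriv σ ⟪w, x i⟫
            * (⟪wstar, x i⟫ - ⟪w, x i⟫)) := by ring
    _ = (1 / (n : ℝ)) * ∑ i, ((1 / 2) * (σ ⟪w, x i⟫ - σ ⟪wstar, x i⟫) ^ 2 +
          (L0 ^ 2 / (2 * α ^ 2)) * ((σ ⟪w, x i⟫ - σ ⟪wstar, x i⟫) * deriv σ ⟪w, x i⟫
            * (⟪wstar, x i⟫ - ⟪w, x i⟫))) := by rw [e1]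
    _ ≤ 0 := mul_nonpos_of_nonneg_of_nonpos hn' hS
end

section
/- Let σ : ℝ → ℝ be differentiable with σ'(z) ≥ α > 0 for all z, and suppose the matrix M = (1/n) Σ_i x_i x_iᵀ has smallest eigenvalue λ_min(M) > 0. Then the empirical loss f(w) = (1/n) Σ_i (1/2)(σ(wᵀ x_i) − σ(w*ᵀ x_i))² satisfies f(w) − f(w*) ≥ (α² λ_min(M)/2)‖w − w*‖² for all w, i.e., f satisfies α²λ_min(M)-quadratic growth. -/
open RealInnerProductSpace Finset

lemma glm_key {σ : ℝ → ℝ} {α : ℝ} (hα : 0 < α)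
    (hσ : Differentiable ℝ σ) (hσ' : ∀ z, α ≤ deriv σ z) (a b : ℝ) :
    α ^ 2 * (a - b) ^ 2 ≤ (σ a - σ b) ^ 2 := by
  have key : ∀ u v : ℝ, u ≤ v → α * (v - u) ≤ σ v - σ u := by
    intro u v huv
    have hd : ∀ z, HasDerivAt (fun z => σ z - α * z) (deriv σ z - α) z := by
      intro z
      have := (hσ z).hasDerivAt.sub ((hasDerivAt_id z).const_mul α)
      simp only [mul_one] at this
      exact this
    have hmono : MonotoneOn (fun z => σ z - α * z) (Set.Icc u v) := by
      apply monotoneOn_of_deriv_nonneg (convex_Icc u v)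
      · exact (hσ.sub ((differentiable_id.const_mul α))).continuous.continuousOn
      · exact fun z _ => (hd z).differentiableAt.differentiableWithinAt
      · intro z _
        rw [(hd z).deriv]
        linarith [hσ' z]
    have := hmono (Set.left_mem_Icc.2 huv) (Set.right_mem_Icc.2 huv) huv
    simp only at this
    linarith
  have habs : α * |a - b| ≤ |σ a - σ b| := by
    rcases le_total a b with h | h
    · have := key a b h
      rw [abs_sub_comm, abs_of_nonneg (by linarith), abs_sub_comm]
      calc α * (b - a) ≤ σ b - σ a := this
        _ ≤ |σ b - σ a| := le_abs_self _
    · have := key b a h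
      rw [abs_of_nonneg (by linarith)]
      calc α * (a - b) ≤ σ a - σ b := this
        _ ≤ |σ a - σ b| := le_abs_self _
  have h1 : (α * |a - b|) ^ 2 ≤ |σ a - σ b| ^ 2 := by
    apply pow_le_pow_left₀ (by positivity) habs
  calc α ^ 2 * (a - b) ^ 2 = (α * |a - b|) ^ 2 := by
        rw [mul_pow, sq_abs]
    _ ≤ |σ a - σ b| ^ 2 := h1
    _ = (σ a - σ b) ^ 2 := sq_abs _

theorem glm_empirical_quadratic_growth {d n : ℕ} (hn : 0 < n)
    (σ : ℝ → ℝ) (α : ℝ) (hα : 0 < α)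
    (hσ : Differentiable ℝ σ)
    (hσ' : ∀ z, α ≤ deriv σ z)
    (x : Fin n → EuclideanSpace ℝ (Fin d))
    (wstar : EuclideanSpace ℝ (Fin d))
    (lam : ℝ) (hlam : 0 < lam)
    (hmin : ∀ v : EuclideanSpace ℝ (Fin d),
      lam * ‖v‖ ^ 2 ≤ (1 / (n : ℝ)) * ∑ i, (⟪x i, v⟫ : ℝ) ^ 2)
    (f : EuclideanSpace ℝ (Fin d) → ℝ)
    (hf : ∀ w, f w = (1 / (n : ℝ)) *
      ∑ i, (1 / 2) * (σ ⟪w, x i⟫ - σ ⟪wstar, x i⟫) ^ 2) :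
    ∀ w, α ^ 2 * lam / 2 * ‖w - wstar‖ ^ 2 ≤ f w - f wstar := by
  intro w
  have hfstar : f wstar = 0 := by
    rw [hf]; simp
  rw [hfstar, sub_zero, hf]
  have hsum : ∀ i : Fin n, α ^ 2 * (⟪x i, w - wstar⟫ : ℝ) ^ 2
      ≤ (σ ⟪w, x i⟫ - σ ⟪wstar, x i⟫) ^ 2 := by
    intro i
    have h := glm_key hα hσ hσ' (⟪w, x i⟫ : ℝ) (⟪wstar, x i⟫ : ℝ)
    have heq : (⟪w, x i⟫ : ℝ) - ⟪wstar, x i⟫ = ⟪x i, w - wstar⟫ := by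
      rw [inner_sub_right, real_inner_comm (x i) w, real_inner_comm (x i) wstar]
    rw [heq] at h
    exact h
  have hn' : (0:ℝ) < n := Nat.cast_pos.2 hn
  have hstep : lam * ‖w - wstar‖ ^ 2 ≤ (1 / (n:ℝ)) * ∑ i, (⟪x i, w - wstar⟫ : ℝ) ^ 2 :=
    hmin (w - wstar)
  have hsum2 : α ^ 2 * ((1 / (n:ℝ)) * ∑ i, (⟪x i, w - wstar⟫ : ℝ) ^ 2)
      ≤ (1 / (n:ℝ)) * ∑ i, (σ ⟪w, x i⟫ - σ ⟪wstar, x i⟫) ^ 2 := by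
    have h1 : α ^ 2 * ∑ i, (⟪x i, w - wstar⟫ : ℝ) ^ 2
        ≤ ∑ i, (σ ⟪w, x i⟫ - σ ⟪wstar, x i⟫) ^ 2 := by
      rw [Finset.mul_sum]
      exact Finset.sum_le_sum fun i _ => hsum i
    calc α ^ 2 * ((1 / (n:ℝ)) * ∑ i, (⟪x i, w - wstar⟫ : ℝ) ^ 2)
        = (1 / (n:ℝ)) * (α ^ 2 * ∑ i, (⟪x i, w - wstar⟫ : ℝ) ^ 2) := by ring
      _ ≤ _ := mul_le_mul_of_nonneg_left h1 (by positivity)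
  have hfinal : α ^ 2 * lam * ‖w - wstar‖ ^ 2
      ≤ (1 / (n:ℝ)) * ∑ i, (σ ⟪w, x i⟫ - σ ⟪wstar, x i⟫) ^ 2 := by
    calc α ^ 2 * lam * ‖w - wstar‖ ^ 2
        = α ^ 2 * (lam * ‖w - wstar‖ ^ 2) := by ring
      _ ≤ α ^ 2 * ((1 / (n:ℝ)) * ∑ i, (⟪x i, w - wstar⟫ : ℝ) ^ 2) := by
          apply mul_le_mul_of_nonneg_left hstep (by positivity)
      _ ≤ _ := hsum2
  have : (1 / (n:ℝ)) * ∑ i, (1/2 : ℝ) * (σ ⟪w, x i⟫ - σ ⟪wstar, x i⟫) ^ 2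
      = (1/2) * ((1 / (n:ℝ)) * ∑ i, (σ ⟪w, x i⟫ - σ ⟪wstar, x i⟫) ^ 2) := by
    rw [← Finset.mul_sum]; ring
  rw [this]
  linarith
end

section
/- Let σ : ℝ → ℝ be differentiable with σ'(z) ≥ α > 0. Define the pseudo-gradient g(w; x) = (σ(wᵀx) − σ(w*ᵀx))x and the objective f(w) = (1/2)‖w − w*‖². Then for any finite family of vectors x_1, …, x_n, (1/n)Σ_i ⟨g(w; x_i), ∇f(w)⟩ ≥ α · (1/n)Σ_i ((w − w*)ᵀ x_i)² ≥ 0 for all w ∈ ℝ^d. -/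
open RealInnerProductSpace Finset

lemma sigma_key (σ : ℝ → ℝ) (α : ℝ) (hσ : Differentiable ℝ σ)
    (hσ' : ∀ z, α ≤ deriv σ z) (a b : ℝ) :
    α * (a - b) ^ 2 ≤ (σ a - σ b) * (a - b) := by
  rcases lt_trichotomy a b with h | h | h
  · obtain ⟨c, _, hc⟩ := exists_deriv_eq_slope σ h hσ.continuous.continuousOn
      (fun z _ => hσ.differentiableAt.differentiableWithinAt)
    rw [eq_div_iff (sub_ne_zero.mpr h.ne')] at hc
    nlinarith [hσ' c, sq_nonneg (a - b)]
  · simp [h]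
  · obtain ⟨c, _, hc⟩ := exists_deriv_eq_slope σ h hσ.continuous.continuousOn
      (fun z _ => hσ.differentiableAt.differentiableWithinAt)
    rw [eq_div_iff (sub_ne_zero.mpr h.ne')] at hc
    nlinarith [hσ' c, sq_nonneg (a - b)]

theorem glmtron_pseudogradient_correlation {d n : ℕ} (hn : 0 < n)
    (σ : ℝ → ℝ) (α : ℝ) (hα : 0 < α)
    (hσ : Differentiable ℝ σ)
    (hσ' : ∀ z, α ≤ deriv σ z)
    (x : Fin n → EuclideanSpace ℝ (Fin d))
    (wstar : EuclideanSpace ℝ (Fin d)) :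
    ∀ w : EuclideanSpace ℝ (Fin d),
      α * ((1 / (n : ℝ)) * ∑ i, (⟪w - wstar, x i⟫ : ℝ) ^ 2) ≤
        (1 / (n : ℝ)) * ∑ i, ⟪(σ ⟪w, x i⟫ - σ ⟪wstar, x i⟫) • x i, w - wstar⟫ ∧
      0 ≤ α * ((1 / (n : ℝ)) * ∑ i, (⟪w - wstar, x i⟫ : ℝ) ^ 2) := by
  intro w
  have hn' : (0:ℝ) < 1 / (n:ℝ) := by positivity
  have hsum : ∀ i : Fin n, α * (⟪w - wstar, x i⟫ : ℝ) ^ 2 ≤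
      ⟪(σ ⟪w, x i⟫ - σ ⟪wstar, x i⟫) • x i, w - wstar⟫ := by
    intro i
    rw [real_inner_smul_left, real_inner_comm (w - wstar) (x i)]
    have h1 : (⟪w - wstar, x i⟫ : ℝ) = ⟪w, x i⟫ - ⟪wstar, x i⟫ := inner_sub_left _ _ _
    rw [h1]
    exact sigma_key σ α hσ hσ' _ _
  constructor
  · rw [mul_left_comm]
    apply mul_le_mul_of_nonneg_left _ hn'.le
    rw [Finset.mul_sum]
    exact Finset.sum_le_sum fun i _ => hsum i
  · positivity
end
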